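/- Let A : Matrix (Fin n) (Fin n) ℝ be symmetric (Hermitian over ℝ) with n ≥ 1, let f : Fin m → Fin n be injective with m ≥ 1, and let B = A.submatrix f f. Then every eigenvalue of B lies between the smallest and the largest eigenvalue of A: min of the eigenvalues of A ≤ min of the eigenvalues of B and max of the eigenvalues of B ≤ max of the eigenvalues of A. -/

import Mathlib

open Matrix

-- Rayleigh bounds for quadratic form
lemma quad_bounds {n : ℕ} (A : Matrix (Fin (n+1)) (Fin (n+1)) ℝ) (hA : A.IsHermitian)
    (x : Fin (n+1) → ℝ) :
    (⨅ i, hA.eigenvalues i) * (x ⬝ᵥ x) ≤ x ⬝ᵥ A *ᵥ x ∧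
      x ⬝ᵥ A *ᵥ x ≤ (⨆ i, hA.eigenvalues i) * (x ⬝ᵥ x) := by
  set U : Matrix (Fin (n+1)) (Fin (n+1)) ℝ := (hA.eigenvectorUnitary : Matrix (Fin (n+1)) (Fin (n+1)) ℝ) with hU
  have hUU : U * star U = 1 := by
    simpa [hU] using (Unitary.mul_star_self_of_mem hA.eigenvectorUnitary.2)
  set y : Fin (n+1) → ℝ := star U *ᵥ x with hy
  have hstar : (star U : Matrix _ _ ℝ) = Uᵀ := by
    ext i j
    simp [Matrix.star_eq_conjTranspose, Matrix.conjTranspose_apply]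
  have h1 : x ⬝ᵥ A *ᵥ x = y ⬝ᵥ (diagonal hA.eigenvalues) *ᵥ y := by
    conv_lhs => rw [hA.spectral_theorem, Unitary.conjStarAlgAut_apply]
    rw [show ((hA.eigenvectorUnitary : Matrix (Fin (n+1)) (Fin (n+1)) ℝ)) = U from rfl]
    rw [RCLike.ofReal_real_eq_id, Function.id_comp]
    rw [← mulVec_mulVec, ← mulVec_mulVec, dotProduct_mulVec, ← hy]
    rw [show x ᵥ* U = y by rw [hy, hstar, mulVec_transpose]]
  have h2 : y ⬝ᵥ y = x ⬝ᵥ x := by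
    rw [hy, dotProduct_mulVec, hstar, vecMul_transpose, mulVec_mulVec, ← hstar, hUU, one_mulVec]
  rw [h1, ← h2]
  have h3 : y ⬝ᵥ diagonal hA.eigenvalues *ᵥ y = ∑ i, hA.eigenvalues i * (y i * y i) := by
    simp only [dotProduct, mulVec_diagonal]
    exact Finset.sum_congr rfl fun i _ => by ring
  have hyy : y ⬝ᵥ y = ∑ i, y i * y i := rfl
  rw [h3, hyy]
  constructor
  · rw [Finset.mul_sum]
    exact Finset.sum_le_sum fun i _ => mul_le_mul_of_nonneg_right
      (ciInf_le (Set.Finite.bddBelow (Set.finite_range _)) i) (mul_self_nonneg _)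
  · rw [Finset.mul_sum]
    exact Finset.sum_le_sum fun i _ => mul_le_mul_of_nonneg_right
      (le_ciSup (Set.Finite.bddAbove (Set.finite_range _)) i) (mul_self_nonneg _)

lemma sum_extend {n m : ℕ} (f : Fin (m+1) → Fin (n+1)) (hf : Function.Injective f)
    (v : Fin (m+1) → ℝ) (w : Fin (n+1) → ℝ) :
    ∑ i, (Function.extend f v 0) i * w i = ∑ k, v k * w (f k) := by
  have h0 : ∑ i, (Function.extend f v 0) i * w i
      = ∑ i ∈ Finset.image f Finset.univ, (Function.extend f v 0) i * w i := by
    refine (Finset.sum_subset (Finset.subset_univ _) ?_).symm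
    intro i _ hi
    rw [Function.extend_apply' _ _ _ (by simpa using hi), Pi.zero_apply, zero_mul]
  rw [h0, Finset.sum_image (fun k _ k' _ h => hf h)]
  exact Finset.sum_congr rfl fun k _ => by rw [hf.extend_apply]

theorem stmt_5 {n m : ℕ} (A : Matrix (Fin (n + 1)) (Fin (n + 1)) ℝ)
    (hA : A.IsHermitian) (f : Fin (m + 1) → Fin (n + 1))
    (hf : Function.Injective f) :
    (⨅ i, hA.eigenvalues i) ≤ (⨅ j, (hA.submatrix f).eigenvalues j) ∧
      (⨆ j, (hA.submatrix f).eigenvalues j) ≤ ⨆ i, hA.eigenvalues i := by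
  set hB := hA.submatrix f with hBdef
  have key : ∀ j, ((⨅ i, hA.eigenvalues i) ≤ hB.eigenvalues j ∧
      hB.eigenvalues j ≤ ⨆ i, hA.eigenvalues i) := by
    intro j
    set v : Fin (m+1) → ℝ := ⇑(hB.eigenvectorBasis j) with hv
    set x : Fin (n+1) → ℝ := Function.extend f v 0 with hx
    have hv1 : v ⬝ᵥ v = 1 := by
      have h1 : v ⬝ᵥ v = (inner ℝ (hB.eigenvectorBasis j) (hB.eigenvectorBasis j) : ℝ) := by
        simp only [dotProduct, PiLp.inner_apply, RCLike.inner_apply, starRingEnd_apply,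
          star_trivial]
        exact Finset.sum_congr rfl fun i _ => rfl
      rw [h1, real_inner_self_eq_norm_sq, hB.eigenvectorBasis.orthonormal.1 j]
      norm_num
    have hxx : x ⬝ᵥ x = 1 := by
      rw [dotProduct, ← hv1, dotProduct]
      rw [show (∑ i, x i * x i) = ∑ k, v k * x (f k) from sum_extend f hf v x]
      exact Finset.sum_congr rfl fun k _ => by rw [hx, hf.extend_apply]
    have hxAx : x ⬝ᵥ A *ᵥ x = hB.eigenvalues j := by
      have e1 : x ⬝ᵥ A *ᵥ x = ∑ k, v k * (A *ᵥ x) (f k) := sum_extend f hf v _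
      have e2 : ∀ k, (A *ᵥ x) (f k) = ((A.submatrix f f) *ᵥ v) k := by
        intro k
        rw [mulVec, mulVec, dotProduct, dotProduct]
        rw [show (∑ i, A (f k) i * x i) = ∑ i, x i * A (f k) i by
          exact Finset.sum_congr rfl fun i _ => mul_comm _ _]
        rw [sum_extend f hf v _]
        exact Finset.sum_congr rfl fun k' _ => by rw [mul_comm, submatrix_apply]
      rw [e1]
      simp_rw [e2]
      rw [show (A.submatrix f f) *ᵥ v = hB.eigenvalues j • v from hB.mulVec_eigenvectorBasis j]
      rw [show (∑ k, v k * (hB.eigenvalues j • v) k) = hB.eigenvalues j * (v ⬝ᵥ v) by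
        rw [dotProduct, Finset.mul_sum]; exact Finset.sum_congr rfl fun k _ => by
          simp [Pi.smul_apply]; ring]
      rw [hv1, mul_one]
    obtain ⟨hlo, hhi⟩ := quad_bounds A hA x
    rw [hxx, mul_one, hxAx] at hlo hhi
    exact ⟨hlo, hhi⟩
  exact ⟨le_ciInf fun j => (key j).1, ciSup_le fun j => (key j).2⟩
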